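/- Let G be a connected graph with n ≥ 3 vertices, u a pendant vertex of G, and G+P_t the graph obtained by attaching a new path of t ≥ 1 vertices to u. Then Alb(G + P_t) = Alb(G). -/

import Mathlib

open Finset

/-- The Albertson irregularity index `Alb(G) = ∑_{uv∈E(G)} |d(u)-d(v)|`. -/
noncomputable def Alb {V : Type*} [Fintype V] (G : SimpleGraph V) [DecidableRel G.Adj] : ℝ :=
  (∑ u : V, ∑ v ∈ G.neighborFinset u, |(G.degree u : ℝ) - (G.degree v : ℝ)|) / 2

/-- The graph `G + P_t`, obtained from `G` by attaching a new pendant path with `t` new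
vertices `w_0, …, w_{t-1}` to the vertex `u`: we add edges `u w_0` and `w_i w_{i+1}`. -/
def addPath {V : Type*} (G : SimpleGraph V) (u : V) (t : ℕ) : SimpleGraph (V ⊕ Fin t) where
  Adj x y :=
    (∃ a b, x = Sum.inl a ∧ y = Sum.inl b ∧ G.Adj a b) ∨
    (∃ j : Fin t, (j : ℕ) = 0 ∧ ((x = Sum.inl u ∧ y = Sum.inr j) ∨ (x = Sum.inr j ∧ y = Sum.inl u))) ∨
    (∃ i j : Fin t, x = Sum.inr i ∧ y = Sum.inr j ∧ ((i : ℕ) + 1 = j ∨ (j : ℕ) + 1 = i))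
  symm := by
    constructor
    rintro x y (⟨a, b, hx, hy, h⟩ | ⟨j, hj, ⟨hx, hy⟩ | ⟨hx, hy⟩⟩ | ⟨i, j, hx, hy, h⟩)
    · exact Or.inl ⟨b, a, hy, hx, h.symm⟩
    · exact Or.inr (Or.inl ⟨j, hj, Or.inr ⟨hy, hx⟩⟩)
    · exact Or.inr (Or.inl ⟨j, hj, Or.inl ⟨hy, hx⟩⟩)
    · exact Or.inr (Or.inr ⟨j, i, hy, hx, h.symm⟩)
  loopless := by
    constructor
    rintro x (⟨a, b, hx, hy, h⟩ | ⟨j, hj, ⟨hx, hy⟩ | ⟨hx, hy⟩⟩ | ⟨i, j, hx, hy, h⟩) <;>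
      subst hx <;> simp_all

instance addPathAdjDecidable {V : Type*} [Fintype V] [DecidableEq V]
    (G : SimpleGraph V) [DecidableRel G.Adj] (u : V) (t : ℕ) :
    DecidableRel (addPath G u t).Adj := fun x y => by
  unfold addPath
  infer_instance

section Aux
variable {V : Type*} [Fintype V] [DecidableEq V]
  (G : SimpleGraph V) [DecidableRel G.Adj] (u : V) (t : ℕ)

lemma adj_inl_inl {a b : V} : (addPath G u t).Adj (Sum.inl a) (Sum.inl b) ↔ G.Adj a b := by
  constructor
  · rintro (⟨a', b', ha, hb, h⟩ | ⟨j, hj, ⟨h1, h2⟩ | ⟨h1, h2⟩⟩ | ⟨i, j, h1, h2, h⟩) <;> simp_all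
  · exact fun h => Or.inl ⟨a, b, rfl, rfl, h⟩

lemma adj_inl_inr {a : V} {j : Fin t} :
    (addPath G u t).Adj (Sum.inl a) (Sum.inr j) ↔ a = u ∧ (j : ℕ) = 0 := by
  constructor
  · rintro (⟨a', b', ha, hb, h⟩ | ⟨k, hk, ⟨h1, h2⟩ | ⟨h1, h2⟩⟩ | ⟨i, k, h1, h2, h⟩) <;> simp_all
  · rintro ⟨rfl, hj⟩
    exact Or.inr (Or.inl ⟨j, hj, Or.inl ⟨rfl, rfl⟩⟩)

lemma adj_inr_inl {a : V} {j : Fin t} :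
    (addPath G u t).Adj (Sum.inr j) (Sum.inl a) ↔ a = u ∧ (j : ℕ) = 0 := by
  rw [SimpleGraph.adj_comm]; exact adj_inl_inr G u t

lemma adj_inr_inr {i j : Fin t} :
    (addPath G u t).Adj (Sum.inr i) (Sum.inr j) ↔ ((i : ℕ) + 1 = j ∨ (j : ℕ) + 1 = i) := by
  constructor
  · rintro (⟨a', b', ha, hb, h⟩ | ⟨k, hk, ⟨h1, h2⟩ | ⟨h1, h2⟩⟩ | ⟨i', k, h1, h2, h⟩) <;> simp_all
  · exact fun h => Or.inr (Or.inr ⟨i, j, rfl, rfl, h⟩)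

lemma nf_inl_ne {a : V} (ha : a ≠ u) :
    (addPath G u t).neighborFinset (Sum.inl a) = (G.neighborFinset a).image Sum.inl := by
  ext y
  rcases y with b | j
  · simp [SimpleGraph.mem_neighborFinset, adj_inl_inl]
  · simp [SimpleGraph.mem_neighborFinset, adj_inl_inr, ha]

lemma nf_inl_u (ht : 1 ≤ t) :
    (addPath G u t).neighborFinset (Sum.inl u) =
      insert (Sum.inr (⟨0, ht⟩ : Fin t)) ((G.neighborFinset u).image Sum.inl) := by
  ext y
  rcases y with b | j
  · simp [SimpleGraph.mem_neighborFinset, adj_inl_inl]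
  · simp [SimpleGraph.mem_neighborFinset, adj_inl_inr, Fin.ext_iff]

lemma nf_inr (j : Fin t) :
    (addPath G u t).neighborFinset (Sum.inr j) =
      (if h : (j : ℕ) = 0 then {Sum.inl u}
        else {Sum.inr (⟨(j : ℕ) - 1, Nat.lt_of_le_of_lt (Nat.sub_le _ _) j.isLt⟩ : Fin t)}) ∪
      (if h : (j : ℕ) + 1 < t then {Sum.inr (⟨(j : ℕ) + 1, h⟩ : Fin t)} else ∅) := by
  ext y
  rcases y with b | k
  · simp only [SimpleGraph.mem_neighborFinset, adj_inr_inl, Finset.mem_union]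
    split_ifs with h0 h1 h1 <;> simp_all [eq_comm]
  · have hk := k.isLt
    have hj := j.isLt
    simp only [SimpleGraph.mem_neighborFinset, adj_inr_inr, Finset.mem_union]
    split_ifs with h0 h1 h1 <;>
      simp only [Finset.mem_singleton, Finset.notMem_empty, Sum.inr.injEq, Sum.inl_ne_inr,
        Sum.inr_ne_inl, Fin.ext_iff, or_false, false_or, iff_false, not_or] <;>
      omega


lemma deg_inl_ne {a : V} (ha : a ≠ u) :
    (addPath G u t).degree (Sum.inl a) = G.degree a := by
  rw [← SimpleGraph.card_neighborFinset_eq_degree, nf_inl_ne G u t ha,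
    Finset.card_image_of_injective _ Sum.inl_injective,
    SimpleGraph.card_neighborFinset_eq_degree]

lemma deg_inl_u (ht : 1 ≤ t) (hu : G.degree u = 1) :
    (addPath G u t).degree (Sum.inl u) = 2 := by
  rw [← SimpleGraph.card_neighborFinset_eq_degree, nf_inl_u G u t ht,
    Finset.card_insert_of_notMem (by simp),
    Finset.card_image_of_injective _ Sum.inl_injective,
    SimpleGraph.card_neighborFinset_eq_degree, hu]

lemma deg_inr (j : Fin t) :
    (addPath G u t).degree (Sum.inr j) = if (j : ℕ) + 1 < t then 2 else 1 := by
  rw [← SimpleGraph.card_neighborFinset_eq_degree, nf_inr]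
  by_cases h1 : (j : ℕ) + 1 < t
  · rw [dif_pos h1, if_pos h1, Finset.card_union_of_disjoint]
    · split_ifs <;> simp
    · split_ifs with h0
      · simp
      · simp only [Finset.disjoint_singleton, ne_eq, Sum.inr.injEq, Fin.ext_iff]
        omega
  · rw [dif_neg h1, if_neg h1, Finset.union_empty]
    split_ifs <;> simp


lemma inner_inr (ht : 1 ≤ t) (hu : G.degree u = 1) (j : Fin t) :
    (∑ y ∈ (addPath G u t).neighborFinset (Sum.inr j),
      |((addPath G u t).degree (Sum.inr j) : ℝ) - ((addPath G u t).degree y : ℝ)|)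
    = if t ≤ (j : ℕ) + 2 then 1 else 0 := by
  have hj := j.isLt
  rw [nf_inr]
  by_cases h1 : (j : ℕ) + 1 < t
  · have hnext : (addPath G u t).degree (Sum.inr (⟨(j : ℕ) + 1, h1⟩ : Fin t))
        = if (j : ℕ) + 1 + 1 < t then 2 else 1 := deg_inr G u t _
    have hdj : (addPath G u t).degree (Sum.inr j) = 2 := by
      rw [deg_inr]; exact if_pos h1
    by_cases h0 : (j : ℕ) = 0
    · rw [dif_pos h0, dif_pos h1, Finset.sum_union (by simp), Finset.sum_singleton,
        Finset.sum_singleton, hdj, hnext, deg_inl_u G u t ht hu]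
      by_cases h2 : (j : ℕ) + 1 + 1 < t
      · rw [if_pos h2, if_neg (by omega)]; norm_num
      · rw [if_neg h2, if_pos (by omega)]; norm_num
    · have hprevlt : (j : ℕ) - 1 < t := Nat.lt_of_le_of_lt (Nat.sub_le _ _) j.isLt
      have hprev : (addPath G u t).degree (Sum.inr (⟨(j : ℕ) - 1, hprevlt⟩ : Fin t)) = 2 := by
        rw [deg_inr]; exact if_pos (show (j : ℕ) - 1 + 1 < t by omega)
      have hdisj : Disjoint ({Sum.inr (⟨(j : ℕ) - 1, hprevlt⟩ : Fin t)} : Finset (V ⊕ Fin t))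
          {Sum.inr (⟨(j : ℕ) + 1, h1⟩ : Fin t)} := by
        simp only [Finset.disjoint_singleton, ne_eq, Sum.inr.injEq, Fin.ext_iff]; omega
      rw [dif_neg h0, dif_pos h1, Finset.sum_union hdisj, Finset.sum_singleton,
        Finset.sum_singleton, hdj, hnext, hprev]
      by_cases h2 : (j : ℕ) + 1 + 1 < t
      · rw [if_pos h2, if_neg (by omega)]; norm_num
      · rw [if_neg h2, if_pos (by omega)]; norm_num
  · have hdj : (addPath G u t).degree (Sum.inr j) = 1 := by
      rw [deg_inr]; exact if_neg h1
    rw [dif_neg h1, Finset.union_empty, if_pos (by omega)]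
    by_cases h0 : (j : ℕ) = 0
    · rw [dif_pos h0, Finset.sum_singleton, hdj, deg_inl_u G u t ht hu]; norm_num
    · have hprevlt : (j : ℕ) - 1 < t := Nat.lt_of_le_of_lt (Nat.sub_le _ _) j.isLt
      have hprev : (addPath G u t).degree (Sum.inr (⟨(j : ℕ) - 1, hprevlt⟩ : Fin t)) = 2 := by
        rw [deg_inr]; exact if_pos (show (j : ℕ) - 1 + 1 < t by omega)
      rw [dif_neg h0, Finset.sum_singleton, hdj, hprev]; norm_num


lemma sum_indicator (ht : 1 ≤ t) :
    (∑ j : Fin t, if t ≤ (j : ℕ) + 2 then (1 : ℝ) else 0) = if t = 1 then 1 else 2 := by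
  rw [Fin.sum_univ_eq_sum_range (fun j => if t ≤ j + 2 then (1 : ℝ) else 0) t,
    Finset.sum_ite, Finset.sum_const, Finset.sum_const_zero, add_zero]
  have hf : (Finset.range t).filter (fun j => t ≤ j + 2) = Finset.Ico (t - 2) t := by
    ext j; simp [Finset.mem_Ico]; omega
  rw [hf, Nat.card_Ico]
  by_cases h : t = 1
  · subst h; norm_num
  · have : t - (t - 2) = 2 := by omega
    rw [this, if_neg h]; norm_num

lemma inner_inl (ht : 1 ≤ t) (hu : G.degree u = 1) (a : V) :
    (∑ y ∈ (addPath G u t).neighborFinset (Sum.inl a),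
      |((addPath G u t).degree (Sum.inl a) : ℝ) - ((addPath G u t).degree y : ℝ)|)
    = (∑ b ∈ G.neighborFinset a,
        |((addPath G u t).degree (Sum.inl a) : ℝ) - ((addPath G u t).degree (Sum.inl b) : ℝ)|)
      + (if a = u then (if t = 1 then (1:ℝ) else 0) else 0) := by
  by_cases ha : a = u
  · rw [ha]
    rw [nf_inl_u G u t ht, Finset.sum_insert (by simp),
      Finset.sum_image (fun x _ y _ h => Sum.inl_injective h), if_pos rfl]
    rw [deg_inl_u G u t ht hu, deg_inr]
    have h0 : ((⟨0, ht⟩ : Fin t) : ℕ) = 0 := rfl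
    rw [h0, add_comm]
    congr 1
    by_cases h : t = 1
    · rw [if_neg (by omega), if_pos h]; norm_num
    · rw [if_pos (by omega), if_neg h]; norm_num
  · rw [nf_inl_ne G u t ha, Finset.sum_image (fun x _ y _ h => Sum.inl_injective h),
      if_neg ha, add_zero]

lemma walk_mem_closed {s : Set V} (hs : ∀ a ∈ s, ∀ b, G.Adj a b → b ∈ s) :
    ∀ {x y : V}, G.Walk x y → x ∈ s → y ∈ s
  | _, _, SimpleGraph.Walk.nil, hx => hx
  | _, _, SimpleGraph.Walk.cons h p, hx => walk_mem_closed hs p (hs _ hx _ h)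

end Aux

theorem stmt11 {V : Type*} [Fintype V] [DecidableEq V]
    (G : SimpleGraph V) [DecidableRel G.Adj] (hG : G.Connected)
    (hn : 3 ≤ Fintype.card V) (u : V) (hu : G.degree u = 1) (t : ℕ) (ht : 1 ≤ t) :
    Alb (addPath G u t) = Alb G := by
  classical
  have hcard1 : (G.neighborFinset u).card = 1 := by
    rw [SimpleGraph.card_neighborFinset_eq_degree, hu]
  obtain ⟨v, hv⟩ := Finset.card_eq_one.mp hcard1
  have huv : G.Adj u v := by
    rw [← SimpleGraph.mem_neighborFinset, hv]; exact Finset.mem_singleton_self v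
  have hne : u ≠ v := huv.ne
  have hvu : v ≠ u := Ne.symm hne
  -- degree of v is at least 2
  have hdv : 2 ≤ G.degree v := by
    by_contra hlt
    have hpos : 0 < G.degree v := by
      rw [← SimpleGraph.card_neighborFinset_eq_degree]
      exact Finset.card_pos.mpr ⟨u, by rw [SimpleGraph.mem_neighborFinset]; exact huv.symm⟩
    have h1 : G.degree v = 1 := by omega
    have hcard1v : (G.neighborFinset v).card = 1 := by
      rw [SimpleGraph.card_neighborFinset_eq_degree, h1]
    obtain ⟨w, hw⟩ := Finset.card_eq_one.mp hcard1v
    have hwu : w = u := by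
      have hm : u ∈ G.neighborFinset v := by
        rw [SimpleGraph.mem_neighborFinset]; exact huv.symm
      rw [hw] at hm; exact (Finset.mem_singleton.mp hm).symm
    have hw' : G.neighborFinset v = {u} := by rw [hw, hwu]
    have hclosed : ∀ a ∈ ({u, v} : Set V), ∀ b, G.Adj a b → b ∈ ({u, v} : Set V) := by
      rintro a (rfl | rfl) b hab
      · right
        have hm : b ∈ G.neighborFinset a := by rwa [SimpleGraph.mem_neighborFinset]
        rw [hv] at hm; exact Finset.mem_singleton.mp hm
      · left
        have hm : b ∈ G.neighborFinset a := by rwa [SimpleGraph.mem_neighborFinset]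
        rw [hw'] at hm; exact Finset.mem_singleton.mp hm
    have hall : ∀ y : V, y ∈ ({u, v} : Set V) := fun y =>
      walk_mem_closed G hclosed ((hG.preconnected u y).some) (Or.inl rfl)
    have hcard : Fintype.card V ≤ 2 := by
      have hsub : (Finset.univ : Finset V) ⊆ ({u, v} : Finset V) := by
        intro y _
        rcases hall y with rfl | rfl <;> simp
      calc Fintype.card V = (Finset.univ : Finset V).card := rfl
        _ ≤ ({u, v} : Finset V).card := Finset.card_le_card hsub
        _ ≤ 2 := le_trans (Finset.card_insert_le _ _) (by simp)
    omega
  have hdvR : (2 : ℝ) ≤ (G.degree v : ℝ) := by exact_mod_cast hdv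
  have hDu : ((addPath G u t).degree (Sum.inl u) : ℝ) = 2 := by
    rw [deg_inl_u G u t ht hu]; norm_num
  have hDne : ∀ a : V, a ≠ u →
      ((addPath G u t).degree (Sum.inl a) : ℝ) = (G.degree a : ℝ) := by
    intro a ha; rw [deg_inl_ne G u t ha]
  -- the inl-inl double sum correction
  have hterm : ∀ a : V,
      (∑ b ∈ G.neighborFinset a,
        (|(G.degree a : ℝ) - (G.degree b : ℝ)|
          - |((addPath G u t).degree (Sum.inl a) : ℝ)
              - ((addPath G u t).degree (Sum.inl b) : ℝ)|))
      = (if a = u then (1:ℝ) else 0) + (if a = v then (1:ℝ) else 0) := by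
    intro a
    by_cases hau : a = u
    · rw [hau, hv, Finset.sum_singleton, if_pos rfl, if_neg hne, add_zero,
        hDu, hDne v hvu, hu]
      push_cast
      rw [abs_of_nonpos (by linarith), abs_of_nonpos (by linarith)]
      ring
    · by_cases hav : a = v
      · rw [hav, if_neg hvu, if_pos rfl, zero_add]
        have hmem : u ∈ G.neighborFinset v := by
          rw [SimpleGraph.mem_neighborFinset]; exact huv.symm
        rw [Finset.sum_eq_single_of_mem u hmem
          (fun b hb hbu => by rw [hDne v hvu, hDne b hbu, sub_self])]
        rw [hDne v hvu, hDu, hu]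
        push_cast
        rw [abs_of_nonneg (by linarith), abs_of_nonneg (by linarith)]
        ring
      · rw [if_neg hau, if_neg hav, add_zero]
        apply Finset.sum_eq_zero
        intro b hb
        have hbu : b ≠ u := by
          intro hbu
          apply hav
          have hm : a ∈ G.neighborFinset u := by
            rw [SimpleGraph.mem_neighborFinset]
            exact (hbu ▸ (SimpleGraph.mem_neighborFinset _ _ _).mp hb).symm
          rw [hv] at hm; exact Finset.mem_singleton.mp hm
        rw [hDne a hau, hDne b hbu, sub_self]
  have hsum3 :
      (∑ a : V, ∑ b ∈ G.neighborFinset a,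
        |((addPath G u t).degree (Sum.inl a) : ℝ)
          - ((addPath G u t).degree (Sum.inl b) : ℝ)|)
      = (∑ a : V, ∑ b ∈ G.neighborFinset a,
          |(G.degree a : ℝ) - (G.degree b : ℝ)|) - 2 := by
    have h := Finset.sum_congr rfl (fun a (_ : a ∈ Finset.univ) => hterm a)
    rw [Finset.sum_add_distrib, Finset.sum_ite_eq' Finset.univ u (fun _ => (1:ℝ)),
      Finset.sum_ite_eq' Finset.univ v (fun _ => (1:ℝ))] at h
    simp only [Finset.mem_univ, if_true] at h
    rw [Finset.sum_congr rfl
      (fun a (_ : a ∈ Finset.univ) => (Finset.sum_sub_distrib _ _ :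
        (∑ b ∈ G.neighborFinset a, _) = _)), Finset.sum_sub_distrib] at h
    linarith
  -- assemble
  unfold Alb
  rw [Fintype.sum_sum_type]
  have hinr : (∑ j : Fin t, ∑ y ∈ (addPath G u t).neighborFinset (Sum.inr j),
      |((addPath G u t).degree (Sum.inr j) : ℝ) - ((addPath G u t).degree y : ℝ)|)
      = if t = 1 then 1 else 2 := by
    rw [Finset.sum_congr rfl (fun j (_ : j ∈ Finset.univ) => inner_inr G u t ht hu j)]
    exact sum_indicator t ht
  have hinl : (∑ a : V, ∑ y ∈ (addPath G u t).neighborFinset (Sum.inl a),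
      |((addPath G u t).degree (Sum.inl a) : ℝ) - ((addPath G u t).degree y : ℝ)|)
      = (∑ a : V, ∑ b ∈ G.neighborFinset a,
          |((addPath G u t).degree (Sum.inl a) : ℝ)
            - ((addPath G u t).degree (Sum.inl b) : ℝ)|)
        + (if t = 1 then (1:ℝ) else 0) := by
    rw [Finset.sum_congr rfl (fun a (_ : a ∈ Finset.univ) => inner_inl G u t ht hu a),
      Finset.sum_add_distrib, Finset.sum_ite_eq' Finset.univ u
        (fun _ => if t = 1 then (1:ℝ) else 0)]
    simp only [Finset.mem_univ, if_true]
  rw [hinr, hinl, hsum3]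
  split_ifs <;> ring
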